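/- Let H and H∂ be Hermitian complex matrices of the same size with H·H∂ = H∂·H, let A be any complex matrix of that size, let β ≥ 0, and let ε ≥ 0. For s ∈ [0,1] set ρ(s) := exp(−β(H − s·H∂))/tr exp(−β(H − s·H∂)). If |Cor_{ρ(s)}(H∂, A)| ≤ ε for every s ∈ [0,1], then |tr(ρ(0)·A) − tr(ρ(1)·A)| ≤ β·ε. (This is the error bound of the paper's commuting case, Eq. (10), in conditional form: taking ε = ‖A‖·‖H∂‖·e^{−l/ξ} from the clustering assumption yields |tr(ρ A) − tr(ρ^{(L_l)} A)| ≤ β‖A‖‖H∂‖e^{−l/ξ}.) -/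

import Mathlib

open scoped Matrix.Norms.L2Operator

/-- `exp(−β·(H − s·H∂))`, the unnormalized Gibbs operator of the interpolated Hamiltonian
`H(s) = H − s·H∂`. -/
noncomputable def expH {N : ℕ} (H Hpart : Matrix (Fin N) (Fin N) ℂ) (β s : ℝ) :
    Matrix (Fin N) (Fin N) ℂ :=
  NormedSpace.exp ((-(β : ℂ)) • (H - (s : ℂ) • Hpart))

/-- The Gibbs expectation `⟨X⟩_{ρ(s)} = tr(exp(−β(H − s·H∂))·X)/tr(exp(−β(H − s·H∂)))`. -/
noncomputable def gibbsAvg {N : ℕ} (H Hpart : Matrix (Fin N) (Fin N) ℂ) (β s : ℝ)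
    (X : Matrix (Fin N) (Fin N) ℂ) : ℂ :=
  (expH H Hpart β s * X).trace / (expH H Hpart β s).trace

open NormedSpace

/-- The trace of the exponential of a Hermitian matrix is nonzero (indeed positive). -/
lemma trace_exp_ne_zero {N : ℕ} (hN : N ≠ 0) {M : Matrix (Fin N) (Fin N) ℂ}
    (hM : M.IsHermitian) : (exp M).trace ≠ 0 := by
  haveI : NeZero N := ⟨hN⟩
  set c : ℂ := ((1/2 : ℝ) : ℂ) with hc
  have hcM : (c • M).IsHermitian := by
    unfold Matrix.IsHermitian
    rw [Matrix.conjTranspose_smul, hM.eq, hc, Complex.star_def, Complex.conj_ofReal]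
  set B := exp (c • M) with hBdef
  have hB : B.IsHermitian := hcM.exp
  have hsplit : exp M = B * B := by
    have h2 : M = c • M + c • M := by rw [hc]; push_cast; module
    rw [hBdef, ← Matrix.exp_add_of_commute _ _ (((Commute.refl M).smul_left c).smul_right c),
      ← h2]
  have hBne : B ≠ 0 := (Matrix.isUnit_exp _).ne_zero
  have htr : (exp M).trace = ((∑ j, ∑ i, Complex.normSq (B i j) : ℝ) : ℂ) := by
    rw [hsplit]
    nth_rewrite 1 [← hB.eq]
    simp only [Matrix.trace, Matrix.diag, Matrix.mul_apply, Matrix.conjTranspose_apply,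
      Complex.star_def]
    push_cast
    congr 1; ext j; congr 1; ext i
    rw [Complex.normSq_eq_conj_mul_self]
  rw [htr]
  rw [Ne, Complex.ofReal_eq_zero]
  intro h0
  apply hBne
  have hcol := (Finset.sum_eq_zero_iff_of_nonneg (fun j _ => Finset.sum_nonneg
    (fun i _ => Complex.normSq_nonneg (B i j)))).mp h0
  ext i j
  have := (Finset.sum_eq_zero_iff_of_nonneg
    (fun i _ => Complex.normSq_nonneg (B i j))).mp (hcol j (Finset.mem_univ j)) i
    (Finset.mem_univ i)
  simpa [Complex.normSq_eq_zero] using this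

/-- For commuting `H`, `H∂` the Gibbs operator factors. -/
lemma expH_eq {N : ℕ} (H Hpart : Matrix (Fin N) (Fin N) ℂ)
    (hcomm : H * Hpart = Hpart * H) (β s : ℝ) :
    expH H Hpart β s =
      exp ((-(β : ℂ)) • H) * exp ((s : ℂ) • ((β : ℂ) • Hpart)) := by
  have hc : Commute H Hpart := hcomm
  rw [expH, show (-(β:ℂ)) • (H - (s:ℂ) • Hpart)
      = (-(β:ℂ)) • H + (s:ℂ) • ((β:ℂ) • Hpart) by module]
  exact Matrix.exp_add_of_commute _ _ ((hc.smul_left _).smul_right _ |>.smul_right _)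

/-- The interpolated Hamiltonian (times `−β`) is Hermitian. -/
lemma interp_hermitian {N : ℕ} {H Hpart : Matrix (Fin N) (Fin N) ℂ}
    (hH : H.IsHermitian) (hHpart : Hpart.IsHermitian) (β s : ℝ) :
    ((-(β : ℂ)) • (H - (s : ℂ) • Hpart)).IsHermitian := by
  unfold Matrix.IsHermitian
  rw [Matrix.conjTranspose_smul, Matrix.conjTranspose_sub, Matrix.conjTranspose_smul,
    hH.eq, hHpart.eq]
  simp [Complex.star_def, Complex.conj_ofReal]

/-- Derivative of the Gibbs expectation in the interpolation parameter: it equals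
`β`-times the correlation of `H∂` and `A`. -/
lemma gibbs_hasDerivAt {N : ℕ} (hN : N ≠ 0) (H Hpart A : Matrix (Fin N) (Fin N) ℂ)
    (hH : H.IsHermitian) (hHpart : Hpart.IsHermitian) (hcomm : H * Hpart = Hpart * H)
    (β s : ℝ) :
    HasDerivAt (fun t : ℝ => gibbsAvg H Hpart β t A)
      ((β : ℂ) * (gibbsAvg H Hpart β s (Hpart * A) -
        gibbsAvg H Hpart β s Hpart * gibbsAvg H Hpart β s A)) s := by
  set E : Matrix (Fin N) (Fin N) ℂ := exp ((-(β : ℂ)) • H) with hE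
  set C : Matrix (Fin N) (Fin N) ℂ := (β : ℂ) • Hpart with hC
  let LA : Matrix (Fin N) (Fin N) ℂ →ₗ[ℂ] ℂ :=
    { toFun := fun X => (E * X * A).trace
      map_add' := by intro X Y; simp [Matrix.mul_add, Matrix.add_mul]
      map_smul' := by intro c X; simp [Matrix.mul_smul, Matrix.smul_mul] }
  let LI : Matrix (Fin N) (Fin N) ℂ →ₗ[ℂ] ℂ :=
    { toFun := fun X => (E * X).trace
      map_add' := by intro X Y; simp [Matrix.mul_add]
      map_smul' := by intro c X; simp [Matrix.mul_smul] }
  have hu : ∀ z : ℂ, HasDerivAt (fun w : ℂ => (E * exp (w • C) * A).trace)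
      ((E * (C * exp (z • C)) * A).trace) z := fun z =>
    LA.toContinuousLinearMap.hasFDerivAt.comp_hasDerivAt z (hasDerivAt_exp_smul_const' C z)
  have hv : ∀ z : ℂ, HasDerivAt (fun w : ℂ => (E * exp (w • C)).trace)
      ((E * (C * exp (z • C))).trace) z := fun z =>
    LI.toContinuousLinearMap.hasFDerivAt.comp_hasDerivAt z (hasDerivAt_exp_smul_const' C z)
  set g : Matrix (Fin N) (Fin N) ℂ := exp (((s : ℂ)) • C) with hg
  set M : Matrix (Fin N) (Fin N) ℂ := expH H Hpart β s with hM
  have hMfac : M = E * g := expH_eq H Hpart hcomm β s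
  have hvne : (E * g).trace ≠ 0 := by
    rw [← hMfac, hM, expH]
    exact trace_exp_ne_zero hN (interp_hermitian hH hHpart β s)
  have hgHp : Hpart * g = g * Hpart := by
    have : Commute Hpart ((s : ℂ) • C) := by
      rw [hC]; exact ((Commute.refl Hpart).smul_right _).smul_right _
    exact (this.exp_right).eq
  have hdiv : HasDerivAt (fun w : ℂ => (E * exp (w • C) * A).trace / (E * exp (w • C)).trace)
      (((E * (C * g) * A).trace * (E * g).trace -
        (E * g * A).trace * (E * (C * g)).trace) / ((E * g).trace) ^ 2) (s : ℂ) :=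
    (hu _).div (hv _) hvne
  have hre : HasDerivAt (fun t : ℝ => (E * exp ((t : ℂ) • C) * A).trace /
      (E * exp ((t : ℂ) • C)).trace)
      (((E * (C * g) * A).trace * (E * g).trace -
        (E * g * A).trace * (E * (C * g)).trace) / ((E * g).trace) ^ 2) s :=
    hdiv.comp_ofReal
  have hfun : (fun t : ℝ => gibbsAvg H Hpart β t A) =
      fun t : ℝ => (E * exp ((t : ℂ) • C) * A).trace / (E * exp ((t : ℂ) • C)).trace := by
    funext t
    rw [gibbsAvg, expH_eq H Hpart hcomm β t]
  rw [hfun]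
  convert hre using 1
  have hCg : E * (C * g) = (β : ℂ) • (M * Hpart) := by
    rw [hC, Matrix.smul_mul, Matrix.mul_smul, hgHp, hMfac, Matrix.mul_assoc]
  have hCgA : E * (C * g) * A = (β : ℂ) • (M * (Hpart * A)) := by
    rw [hCg, Matrix.smul_mul, Matrix.mul_assoc]
  have huval : E * g * A = M * A := by rw [hMfac]
  rw [hCgA, hCg, huval, Matrix.trace_smul, Matrix.trace_smul, gibbsAvg, gibbsAvg, gibbsAvg,
    ← hM, hMfac]
  field_simp
  ring

/-- The error bound of the paper's commuting case (Eq. (10)), in conditional form: for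
commuting Hermitian `H`, `H∂` and `ρ(s) := exp(−β(H − s·H∂))/tr exp(−β(H − s·H∂))`, if the
correlation `Cor_{ρ(s)}(H∂, A) = ⟨H∂·A⟩_{ρ(s)} − ⟨H∂⟩_{ρ(s)}·⟨A⟩_{ρ(s)}` has modulus at most
`ε` for all `s ∈ [0,1]`, then `|tr(ρ(0)·A) − tr(ρ(1)·A)| ≤ β·ε`. -/
theorem commuting_case_error_bound {N : ℕ} (H Hpart A : Matrix (Fin N) (Fin N) ℂ)
    (hH : H.IsHermitian) (hHpart : Hpart.IsHermitian) (hcomm : H * Hpart = Hpart * H)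
    (β ε : ℝ) (hβ : 0 ≤ β) (hε : 0 ≤ ε)
    (hcor : ∀ s ∈ Set.Icc (0 : ℝ) 1,
      ‖gibbsAvg H Hpart β s (Hpart * A) -
          gibbsAvg H Hpart β s Hpart * gibbsAvg H Hpart β s A‖ ≤ ε) :
    ‖gibbsAvg H Hpart β 0 A - gibbsAvg H Hpart β 1 A‖ ≤ β * ε := by
  rcases Nat.eq_zero_or_pos N with hN | hN
  · subst hN
    have hz : ∀ s : ℝ, gibbsAvg H Hpart β s A = 0 := by
      intro s
      simp [gibbsAvg, Matrix.trace]
    rw [hz, hz, sub_zero, norm_zero]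
    positivity
  · have hN' : N ≠ 0 := hN.ne'
    set f : ℝ → ℂ := fun t => gibbsAvg H Hpart β t A with hf
    set d : ℝ → ℂ := fun s => (β : ℂ) * (gibbsAvg H Hpart β s (Hpart * A) -
        gibbsAvg H Hpart β s Hpart * gibbsAvg H Hpart β s A) with hd
    have hder : ∀ x ∈ Set.Icc (0 : ℝ) 1, HasDerivWithinAt f (d x) (Set.Icc (0 : ℝ) 1) x :=
      fun x _ => (gibbs_hasDerivAt hN' H Hpart A hH hHpart hcomm β x).hasDerivWithinAt
    have hbound : ∀ x ∈ Set.Icc (0 : ℝ) 1, ‖d x‖ ≤ β * ε := by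
      intro x hx
      rw [hd]
      simp only [norm_mul, Complex.norm_real, Real.norm_eq_abs, abs_of_nonneg hβ]
      exact mul_le_mul_of_nonneg_left
        (by exact hcor x hx) hβ
    have key := norm_image_sub_le_of_norm_deriv_le_segment' hder
      (fun x hx => hbound x (Set.mem_Icc_of_Ico hx)) 1 (Set.right_mem_Icc.mpr zero_le_one)
    rw [sub_zero, mul_one] at key
    rw [norm_sub_rev]
    exact key
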